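/- Assume the rainbow-subgraph setup: c is an edge-coloring of the complete graph K_n containing no rainbow copy of (t+2)K_3 (t ≥ 0); G is a spanning subgraph of K_n that is rainbow under c and contains exactly one edge of every color used by c; M is a family of t+1 pairwise vertex-disjoint triangles in G; D is the induced subgraph of G on the vertices not covered by M; and X is a set of vertices of D that is independent in D such that any two distinct vertices of X have at least 4 common neighbors in D. Then for any two distinct vertices u, v ∈ X, the color c(uv) equals c(e) for some edge e of a triangle of M. -/

import Mathlib

/-- `G` contains `k` pairwise vertex-disjoint triangles whose `3k` edges receive pairwise
distinct colors under `c`: a rainbow copy of `k·K₃`. -/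
def RainbowIndepTrianglesIn {V : Type*} (G : SimpleGraph V) (k : ℕ)
    (c : Sym2 V → ℕ) : Prop :=
  ∃ f : Fin k → Fin 3 → V,
    Function.Injective (fun p : Fin k × Fin 3 => f p.1 p.2) ∧
    (∀ i, G.Adj (f i 0) (f i 1) ∧ G.Adj (f i 1) (f i 2) ∧ G.Adj (f i 0) (f i 2)) ∧
    Function.Injective (fun p : Fin k × Fin 3 => c s(f p.1 p.2, f p.1 (p.2 + 1)))

/-- Claim 2: in the rainbow-subgraph setup, the color of any edge between two vertices of
`X` is the color of an edge of some triangle of `M`. -/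
theorem color_of_X_pair_is_M_color (t n : ℕ) (c : Sym2 (Fin n) → ℕ)
    -- the coloring `c` of `K_n` admits no rainbow `(t+2)K₃`
    (hnoRainbow : ¬ RainbowIndepTrianglesIn (⊤ : SimpleGraph (Fin n)) (t + 2) c)
    -- `G` is a (spanning) rainbow subgraph of `K_n` with one edge of each used color
    (G : SimpleGraph (Fin n))
    (hGrainbow : ∀ e ∈ G.edgeSet, ∀ e' ∈ G.edgeSet, c e = c e' → e = e')
    (hGcolors : ∀ e ∈ (⊤ : SimpleGraph (Fin n)).edgeSet, ∃ e' ∈ G.edgeSet, c e' = c e)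
    -- `M` is a family of `t+1` pairwise vertex-disjoint triangles of `G`, given by `f`
    (f : Fin (t + 1) → Fin 3 → Fin n)
    (hinj : Function.Injective fun p : Fin (t + 1) × Fin 3 => f p.1 p.2)
    (htri : ∀ i, G.Adj (f i 0) (f i 1) ∧ G.Adj (f i 1) (f i 2) ∧ G.Adj (f i 0) (f i 2))
    -- `Dset` is the vertex set of `D`, the induced subgraph on vertices not covered by `M`
    (Dset : Set (Fin n)) (hDset : Dset = {x | ∀ i j, f i j ≠ x})
    -- `X ⊆ V(D)` is independent in `D`, any two of its vertices having
    -- at least `4` common neighbors in `D`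
    (X : Set (Fin n)) (hXD : X ⊆ Dset)
    (hXind : ∀ u ∈ X, ∀ v ∈ X, u ≠ v → ¬ G.Adj u v)
    (hXcn : ∀ u ∈ X, ∀ v ∈ X, u ≠ v →
      4 ≤ (G.neighborSet u ∩ G.neighborSet v ∩ Dset).ncard)
    :
    ∀ u ∈ X, ∀ v ∈ X, u ≠ v →
      ∃ i : Fin (t + 1), ∃ j k : Fin 3, j ≠ k ∧ c s(u, v) = c s(f i j, f i k) := by
  intro u hu v hv huv
  by_contra hcon
  push_neg at hcon
  have hD : ∀ z ∈ Dset, ∀ i j, f i j ≠ z := by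
    intro z hz; rw [hDset] at hz; exact hz
  have huD := hXD hu
  have hvD := hXD hv
  obtain ⟨e', he'G, hce'⟩ := hGcolors s(u, v) (by simpa [SimpleGraph.mem_edgeSet] using huv)
  obtain ⟨x, y, rfl⟩ : ∃ x y, e' = s(x, y) := by
    induction e' using Sym2.ind with | _ x y => exact ⟨x, y, rfl⟩
  have hxyG : G.Adj x y := he'G
  -- find a common neighbor w of u,v in Dset avoiding x,y
  have hS : 4 ≤ (G.neighborSet u ∩ G.neighborSet v ∩ Dset).ncard := hXcn u hu v hv huv
  obtain ⟨w, hwS, hwxy⟩ : ((G.neighborSet u ∩ G.neighborSet v ∩ Dset) \ {x, y}).Nonempty := by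
    rw [Set.nonempty_iff_ne_empty]
    intro hemp
    have hsub : (G.neighborSet u ∩ G.neighborSet v ∩ Dset) ⊆ {x, y} := by
      intro z hz
      by_contra hzx
      have : z ∈ (G.neighborSet u ∩ G.neighborSet v ∩ Dset) \ {x, y} := ⟨hz, hzx⟩
      rw [hemp] at this
      exact this
    have h1 := Set.ncard_le_ncard hsub (Set.toFinite _)
    have h2 : ({x, y} : Set (Fin n)).ncard ≤ 2 := by
      refine le_trans (Set.ncard_insert_le _ _) ?_
      simp [Set.ncard_singleton]
    omega
  have hwu : G.Adj u w := hwS.1.1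
  have hwv : G.Adj v w := hwS.1.2
  have hwD : w ∈ Dset := hwS.2
  have hwx : w ≠ x := by simp at hwxy; exact hwxy.1
  have hwy : w ≠ y := by simp at hwxy; exact hwxy.2
  have huw : u ≠ w := hwu.ne
  have hvw : v ≠ w := hwv.ne
  have hj1 : ∀ j : Fin 3, j ≠ j + 1 := by decide
  have hj2 : ∀ j : Fin 3, j ≠ j + 1 + 1 := by decide
  have hgD : ∀ j : Fin 3, (![u, v, w] : Fin 3 → Fin n) j ∈ Dset := by
    intro j; fin_cases j <;> assumption
  -- the triangle edges of M are in G
  have hinj' : ∀ (a b : Fin (t + 1)) (ja jb : Fin 3), f a ja = f b jb → a = b ∧ ja = jb := by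
    intro a b ja jb hab
    have := @hinj (a, ja) (b, jb) hab
    exact ⟨congrArg Prod.fst this, congrArg Prod.snd this⟩
  have hedge : ∀ (i : Fin (t + 1)) (j : Fin 3), s(f i j, f i (j + 1)) ∈ G.edgeSet := by
    intro i j
    fin_cases j
    · exact (htri i).1
    · exact (htri i).2.1
    · exact ((htri i).2.2).symm
  -- the new triangle family
  set F : Fin (t + 2) → Fin 3 → Fin n :=
    fun i => if h : (i : ℕ) < t + 1 then f ⟨i, h⟩ else ![u, v, w] with hF
  set E : Fin (t + 2) × Fin 3 → Sym2 (Fin n) :=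
    fun p => if h : (p.1 : ℕ) < t + 1 then s(f ⟨p.1, h⟩ p.2, f ⟨p.1, h⟩ (p.2 + 1))
      else ![s(x, y), s(v, w), s(w, u)] p.2 with hE
  have hEG : ∀ p, E p ∈ G.edgeSet := by
    rintro ⟨i, j⟩
    by_cases h : (i : ℕ) < t + 1
    · simpa [hE, h, show (i : ℕ) ≤ t by omega] using hedge ⟨i, h⟩ j
    · fin_cases j
      · simpa [hE, h, show ¬ (i : ℕ) ≤ t by omega] using hxyG
      · simpa [hE, h, show ¬ (i : ℕ) ≤ t by omega] using hwv
      · simpa [hE, h, show ¬ (i : ℕ) ≤ t by omega] using hwu.symm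
  have hEc : ∀ p : Fin (t + 2) × Fin 3, c s(F p.1 p.2, F p.1 (p.2 + 1)) = c (E p) := by
    rintro ⟨i, j⟩
    by_cases h : (i : ℕ) < t + 1
    · simp [hF, hE, h, show (i : ℕ) ≤ t by omega]
    · fin_cases j
      · simpa [hF, hE, h, show ¬ (i : ℕ) ≤ t by omega] using hce'.symm
      · simp [hF, hE, h, show ¬ (i : ℕ) ≤ t by omega]
      · simp [hF, hE, h, show ¬ (i : ℕ) ≤ t by omega]
  have hEinj : Function.Injective E := by
    rintro ⟨i, j⟩ ⟨i', j'⟩ h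
    by_cases hi : (i : ℕ) < t + 1 <;> by_cases hi' : (i' : ℕ) < t + 1
    · simp only [hE, hi, hi', dif_pos] at h
      rcases Sym2.eq_iff.mp h with ⟨h1, h2⟩ | ⟨h1, h2⟩
      · obtain ⟨e1, e2⟩ := hinj' _ _ _ _ h1
        have hii : i = i' := Fin.ext (by simpa using congrArg Fin.val e1)
        rw [hii, e2]
      · obtain ⟨-, hjj⟩ := hinj' _ _ _ _ h1
        obtain ⟨-, hjj'⟩ := hinj' _ _ _ _ h2
        rw [← hjj'] at hjj
        exact absurd hjj (hj2 j)
    · exfalso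
      simp only [hE, hi, hi', dif_pos, dif_neg] at h
      fin_cases j'
      · have h' : s(f ⟨i, hi⟩ j, f ⟨i, hi⟩ (j + 1)) = s(x, y) := h
        exact hcon ⟨i, hi⟩ j (j + 1) (hj1 j) (by rw [← hce', h'])
      · rcases Sym2.eq_iff.mp h with ⟨h1, _⟩ | ⟨h1, _⟩
        · exact hD v hvD ⟨i, hi⟩ j h1
        · exact hD w hwD ⟨i, hi⟩ j h1
      · rcases Sym2.eq_iff.mp h with ⟨h1, _⟩ | ⟨h1, _⟩
        · exact hD w hwD ⟨i, hi⟩ j h1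
        · exact hD u huD ⟨i, hi⟩ j h1
    · exfalso
      simp only [hE, hi, hi', dif_pos, dif_neg] at h
      fin_cases j
      · have h' : s(f ⟨i', hi'⟩ j', f ⟨i', hi'⟩ (j' + 1)) = s(x, y) := h.symm
        exact hcon ⟨i', hi'⟩ j' (j' + 1) (hj1 j') (by rw [← hce', h'])
      · rcases Sym2.eq_iff.mp h.symm with ⟨h1, _⟩ | ⟨h1, _⟩
        · exact hD v hvD ⟨i', hi'⟩ j' h1
        · exact hD w hwD ⟨i', hi'⟩ j' h1
      · rcases Sym2.eq_iff.mp h.symm with ⟨h1, _⟩ | ⟨h1, _⟩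
        · exact hD w hwD ⟨i', hi'⟩ j' h1
        · exact hD u huD ⟨i', hi'⟩ j' h1
    · have hii : i = i' := by
        have hib : (i : ℕ) < t + 2 := i.2
        have hib' : (i' : ℕ) < t + 2 := i'.2
        exact Fin.ext (by omega)
      subst hii
      simp only [hE, hi, dif_neg] at h
      have hjj : j = j' := by
        fin_cases j <;> fin_cases j' <;>
          first
          | rfl
          | (exfalso
             rcases Sym2.eq_iff.mp h with ⟨h1, h2⟩ | ⟨h1, h2⟩ <;>
               first
               | exact hwx h1.symm | exact hwy h2.symm | exact hwx h2.symm | exact hwy h1.symm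
               | exact hwx h1 | exact hwy h1 | exact hwx h2 | exact hwy h2
               | exact hvw h1 | exact hvw h1.symm | exact hvw h2 | exact hvw h2.symm
               | exact huv h1 | exact huv h1.symm | exact huv h2 | exact huv h2.symm)
      rw [hjj]
  apply hnoRainbow
  refine ⟨F, ?_, ?_, ?_⟩
  · rintro ⟨i, j⟩ ⟨i', j'⟩ h
    simp only at h
    by_cases hi : (i : ℕ) < t + 1 <;> by_cases hi' : (i' : ℕ) < t + 1
    · simp only [hF, hi, hi', dif_pos] at h
      obtain ⟨e1, e2⟩ := hinj' _ _ _ _ h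
      have hii : i = i' := Fin.ext (by simpa using congrArg Fin.val e1)
      rw [hii, e2]
    · exfalso
      simp only [hF, hi, hi', dif_pos, dif_neg] at h
      exact hD _ (hgD j') ⟨i, hi⟩ j h
    · exfalso
      simp only [hF, hi, hi', dif_pos, dif_neg] at h
      exact hD _ (hgD j) ⟨i', hi'⟩ j' h.symm
    · have hii : i = i' := by
        have hib : (i : ℕ) < t + 2 := i.2
        have hib' : (i' : ℕ) < t + 2 := i'.2
        exact Fin.ext (by omega)
      subst hii
      simp only [hF, hi, dif_neg] at h
      have hjj : j = j' := by
        fin_cases j <;> fin_cases j' <;>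
          first
          | rfl
          | exact absurd (h : u = v) huv
          | exact absurd (h : u = w) huw
          | exact absurd (h : v = u) (Ne.symm huv)
          | exact absurd (h : v = w) hvw
          | exact absurd (h : w = u) (Ne.symm huw)
          | exact absurd (h : w = v) (Ne.symm hvw)
      rw [hjj]
  · intro i
    by_cases hi : (i : ℕ) < t + 1
    · simp only [hF, hi, dif_pos]
      exact ⟨by simp [((htri ⟨i, hi⟩).1).ne], by simp [((htri ⟨i, hi⟩).2.1).ne],
        by simp [((htri ⟨i, hi⟩).2.2).ne]⟩
    · simp only [hF, hi, dif_neg]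
      exact ⟨by simpa using huv, by simpa using hvw, by simpa using huw⟩
  · intro p q h
    exact hEinj (hGrainbow _ (hEG p) _ (hEG q) (by rw [← hEc p, ← hEc q]; exact h))
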